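/- Let x be a non-uniform lattice of either class and ν ∈ ℝ. Define σ̃_ν(z) := σ(z) + ½·τ_ν(z)·∇x_{ν+1}(z). Then there exist constants A, B, C, D, E ∈ ℂ such that for every z ∈ ℂ with ∇x_{ν+1}(z) ≠ 0 one has σ̃_ν(z) = A·x_ν(z)² + B·x_ν(z) + C and τ_ν(z) = D·x_ν(z) + E; that is, σ̃_ν and τ_ν are polynomials of degree at most two and at most one, respectively, in the variable x_ν(z). (Lemma 2.1) -/
import Mathlib


noncomputable section

open Finset

/-- `x` is a non-uniform lattice of one of the two classes (q-quadratic with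
`q = e^w`, or quadratic), together with its associated functions `α = a` and
`γ = g`. -/
def IsNonUniformLattice (w : ℂ) (x : ℂ → ℂ) (a g : ℝ → ℂ) : Prop :=
  (Complex.exp w ≠ 1 ∧
    ∃ c1 c2 c3 : ℂ, c1 * c2 ≠ 0 ∧
      (∀ s : ℂ, x s = c1 * Complex.exp (s * w) + c2 * Complex.exp (-(s * w)) + c3) ∧
      (∀ μ : ℝ, a μ =
        (Complex.exp ((μ : ℂ) / 2 * w) + Complex.exp (-((μ : ℂ) / 2 * w))) / 2) ∧
      (∀ μ : ℝ, g μ =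
        (Complex.exp ((μ : ℂ) / 2 * w) - Complex.exp (-((μ : ℂ) / 2 * w))) /
          (Complex.exp ((1 : ℂ) / 2 * w) - Complex.exp (-((1 : ℂ) / 2 * w))))) ∨
  (∃ c1 c2 c3 : ℂ, c1 ≠ 0 ∧
    (∀ s : ℂ, x s = c1 * s ^ 2 + c2 * s + c3) ∧
    (∀ μ : ℝ, a μ = 1) ∧ (∀ μ : ℝ, g μ = (μ : ℂ)))

/-- `xl x ν s = x_ν(s) = x (s + ν/2)`. -/
def xl (x : ℂ → ℂ) (ν : ℝ) (s : ℂ) : ℂ := x (s + (ν : ℂ) / 2)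

/-- `σ(z) = σ̃(x z) - (1/2)·τ̃(x z)·∇x₁(z)`. -/
def sig (x : ℂ → ℂ) (st tt : Polynomial ℂ) (z : ℂ) : ℂ :=
  st.eval (x z) - (1 / 2) * tt.eval (x z) * (xl x 1 z - xl x 1 (z - 1))

/-- `κ_ν = α(ν-1)·τ̃' + (1/2)·γ(ν-1)·σ̃''`. -/
def kap (a g : ℝ → ℂ) (st tt : Polynomial ℂ) (ν : ℝ) : ℂ :=
  a (ν - 1) * tt.coeff 1 + (1 / 2) * g (ν - 1) * (2 * st.coeff 2)

/-- Backward difference quotient `∇_ν f (z) = ∇f(z)/∇x_ν(z)`. -/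
def nab (x : ℂ → ℂ) (ν : ℝ) (f : ℂ → ℂ) (z : ℂ) : ℂ :=
  (f z - f (z - 1)) / (xl x ν z - xl x ν (z - 1))

/-- Forward difference quotient `Δ_ν f (z) = Δf(z)/Δx_ν(z)`. -/
def del (x : ℂ → ℂ) (ν : ℝ) (f : ℂ → ℂ) (z : ℂ) : ℂ :=
  (f (z + 1) - f z) / (xl x ν (z + 1) - xl x ν z)

/-- Generalized power `[x_α(s) - x_α(z)]^{(m)} = ∏_{k=0}^{m-1} (x_α(s) - x_α(z-k))`. -/
def gp (x : ℂ → ℂ) (m : ℕ) (al : ℝ) (s z : ℂ) : ℂ :=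
  ∏ k ∈ Finset.range m, (xl x al s - xl x al (z - (k : ℂ)))

/-- The defining relation for the family `τ_ν = T ν`:
`τ_ν(z)·∇x_{ν+1}(z) = σ(z+ν) - σ(z) + τ(z+ν)·∇x₁(z+ν)`. -/
def TauFamily (x : ℂ → ℂ) (st tt : Polynomial ℂ) (T : ℝ → ℂ → ℂ) : Prop :=
  ∀ (ν : ℝ) (z : ℂ),
    T ν z * (xl x (ν + 1) z - xl x (ν + 1) (z - 1)) =
      sig x st tt (z + (ν : ℂ)) - sig x st tt z +
        tt.eval (x (z + (ν : ℂ))) * (xl x 1 (z + (ν : ℂ)) - xl x 1 (z + (ν : ℂ) - 1))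

lemma eval_deg2' (p : Polynomial ℂ) (hp : p.degree ≤ 2) (y : ℂ) :
    p.eval y = p.coeff 0 + p.coeff 1 * y + p.coeff 2 * y ^ 2 := by
  have h : p.natDegree < 3 := by
    have : p.natDegree ≤ 2 := Polynomial.natDegree_le_iff_degree_le.mpr (by exact_mod_cast hp)
    omega
  rw [Polynomial.eval_eq_sum_range' h]
  simp [Finset.sum_range_succ]

lemma eval_deg1' (p : Polynomial ℂ) (hp : p.degree ≤ 1) (y : ℂ) :
    p.eval y = p.coeff 0 + p.coeff 1 * y := by
  have h : p.natDegree < 2 := by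
    have : p.natDegree ≤ 1 := Polynomial.natDegree_le_iff_degree_le.mpr (by exact_mod_cast hp)
    omega
  rw [Polynomial.eval_eq_sum_range' h]
  simp [Finset.sum_range_succ]

lemma gdlem (dn en lm Xx Yy : ℂ) (hl : lm ≠ 0) :
    lm * ((dn / lm * Xx + en / lm) * Yy) = (dn * Xx + en) * Yy := by
  field_simp

set_option maxHeartbeats 1600000 in
set_option maxRecDepth 8000 in
set_option maxHeartbeats 1600000 in
set_option maxRecDepth 8000 in
/-- Lemma 2.1: `σ̃_ν` and `τ_ν` are polynomials of degree at most two and one,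
respectively, in the variable `x_ν(z)`. -/
theorem lemma2_1
    (w : ℂ) (x : ℂ → ℂ) (a g : ℝ → ℂ)
    (hlat : IsNonUniformLattice w x a g)
    (st tt : Polynomial ℂ) (hst : st.degree ≤ 2) (htt : tt.degree ≤ 1)
    (T : ℝ → ℂ → ℂ) (hT : TauFamily x st tt T) (ν : ℝ) :
    ∃ A B C D E : ℂ, ∀ z : ℂ,
      xl x (ν + 1) z - xl x (ν + 1) (z - 1) ≠ 0 →
      (sig x st tt z + (1 / 2) * T ν z * (xl x (ν + 1) z - xl x (ν + 1) (z - 1)) =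
          A * xl x ν z ^ 2 + B * xl x ν z + C) ∧
        T ν z = D * xl x ν z + E := by
  have hev2 : ∀ y, st.eval y = st.coeff 0 + st.coeff 1 * y + st.coeff 2 * y ^ 2 :=
    eval_deg2' st hst
  have hev1 : ∀ y, tt.eval y = tt.coeff 0 + tt.coeff 1 * y := eval_deg1' tt htt
  suffices h : ∃ A B C D E : ℂ, ∀ z : ℂ,
      (sig x st tt z + (1 / 2) * (sig x st tt (z + (ν : ℂ)) - sig x st tt z +
          tt.eval (x (z + (ν : ℂ))) * (xl x 1 (z + (ν : ℂ)) - xl x 1 (z + (ν : ℂ) - 1))) =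
        A * xl x ν z ^ 2 + B * xl x ν z + C) ∧
      (sig x st tt (z + (ν : ℂ)) - sig x st tt z +
          tt.eval (x (z + (ν : ℂ))) * (xl x 1 (z + (ν : ℂ)) - xl x 1 (z + (ν : ℂ) - 1)) =
        (D * xl x ν z + E) * (xl x (ν + 1) z - xl x (ν + 1) (z - 1))) by
    obtain ⟨A, B, C, D, E, h⟩ := h
    refine ⟨A, B, C, D, E, fun z hz => ⟨?_, ?_⟩⟩
    · have h1 : (1 : ℂ) / 2 * T ν z * (xl x (ν + 1) z - xl x (ν + 1) (z - 1)) =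
          1 / 2 * (T ν z * (xl x (ν + 1) z - xl x (ν + 1) (z - 1))) := by ring
      rw [h1, hT ν z]
      exact (h z).1
    · refine mul_right_cancel₀ hz ?_
      rw [hT ν z, (h z).2]
  rcases hlat with ⟨hq, c1, c2, c3, hc, hx, -, -⟩ | ⟨c1, c2, c3, hc, hx, -, -⟩
  · -- q-quadratic case
    have hlam : Complex.exp (w/2) - Complex.exp (-(w/2)) ≠ 0 := by
      intro h0
      rw [sub_eq_zero] at h0
      apply hq
      have hw : Complex.exp w = Complex.exp (w/2) * Complex.exp (w/2) := by
        rw [← Complex.exp_add]; ring_nf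
      rw [hw]
      nth_rewrite 2 [h0]
      rw [← Complex.exp_add]
      simp
    refine ⟨(1/4*(st.coeff 2)*((Complex.exp ((ν:ℂ)*w/2) + Complex.exp (-((ν:ℂ)*w/2)))^2+(Complex.exp ((ν:ℂ)*w/2) - Complex.exp (-((ν:ℂ)*w/2)))^2) + 1/4*(Complex.exp (w/2) - Complex.exp (-(w/2)))*(Complex.exp ((ν:ℂ)*w/2) - Complex.exp (-((ν:ℂ)*w/2)))*(Complex.exp ((ν:ℂ)*w/2) + Complex.exp (-((ν:ℂ)*w/2)))*(tt.coeff 1)), (1/2*(st.coeff 2)*(Complex.exp ((ν:ℂ)*w/2) + Complex.exp (-((ν:ℂ)*w/2)))*c3*(2-(Complex.exp ((ν:ℂ)*w/2) + Complex.exp (-((ν:ℂ)*w/2)))) - 1/2*(st.coeff 2)*(Complex.exp ((ν:ℂ)*w/2) - Complex.exp (-((ν:ℂ)*w/2)))^2*c3 + 1/2*(st.coeff 1)*(Complex.exp ((ν:ℂ)*w/2) + Complex.exp (-((ν:ℂ)*w/2))) - 1/2*(Complex.exp (w/2) - Complex.exp (-(w/2)))*(Complex.exp ((ν:ℂ)*w/2)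 - Complex.exp (-((ν:ℂ)*w/2)))*(Complex.exp ((ν:ℂ)*w/2) + Complex.exp (-((ν:ℂ)*w/2)))*(tt.coeff 1)*c3 + 1/4*(Complex.exp (w/2) - Complex.exp (-(w/2)))*(Complex.exp ((ν:ℂ)*w/2) - Complex.exp (-((ν:ℂ)*w/2)))*((tt.coeff 1)*c3+(tt.coeff 0))), (1/4*(st.coeff 2)*(2*c3-(Complex.exp ((ν:ℂ)*w/2) + Complex.exp (-((ν:ℂ)*w/2)))*c3)^2 + 1/4*(st.coeff 2)*(Complex.exp ((ν:ℂ)*w/2) - Complex.exp (-((ν:ℂ)*w/2)))^2*(c3^2-4*c1*c2) - 1/2*(st.coeff 1)*(Complex.exp ((ν:ℂ)*w/2) + Complex.exp (-((ν:ℂ)*w/2)))*c3 + (st.coeff 1)*c3 + (st.coeff 0) + 1/4*(Complex.exp (w/2) - Complex.exp (-(w/2)))*(tt.coeff 1)*(Complex.exp ((ν:ℂ)*w/2) - Complex.exp (-((ν:ℂ)*w/2)))*(Complex.exp ((ν:ℂ)*w/2) + Complex.exp (-((ν:ℂ)*w/2)))*c3^2 - 1/2*(Complex.exp (w/2) - Complex.exp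 (-(w/2)))*(tt.coeff 1)*(Complex.exp ((ν:ℂ)*w/2) - Complex.exp (-((ν:ℂ)*w/2)))*(Complex.exp ((ν:ℂ)*w/2) + Complex.exp (-((ν:ℂ)*w/2)))*c1*c2 - 1/4*(Complex.exp (w/2) - Complex.exp (-(w/2)))*(Complex.exp ((ν:ℂ)*w/2) - Complex.exp (-((ν:ℂ)*w/2)))*c3*((tt.coeff 1)*c3+(tt.coeff 0))), (((Complex.exp ((ν:ℂ)*w/2) - Complex.exp (-((ν:ℂ)*w/2)))*(Complex.exp ((ν:ℂ)*w/2) + Complex.exp (-((ν:ℂ)*w/2)))*(st.coeff 2) + (1/2)*(Complex.exp (w/2) - Complex.exp (-(w/2)))*((Complex.exp ((ν:ℂ)*w/2) + Complex.exp (-((ν:ℂ)*w/2)))^2-2)*(tt.coeff 1))/(Complex.exp (w/2) - Complex.exp (-(w/2)))), (((Complex.exp ((ν:ℂ)*w/2) - Complex.exp (-((ν:ℂ)*w/2)))*((st.coeff 1)+(st.coeff 2)*c3*(2-(Complex.exp ((ν:ℂ)*w/2) + Complex.exp (-((ν:ℂ)*w/2))))) + (1/2)*(Complex.exp (w/2)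 - Complex.exp (-(w/2)))*((tt.coeff 0)*(Complex.exp ((ν:ℂ)*w/2) + Complex.exp (-((ν:ℂ)*w/2)))+(tt.coeff 1)*c3*((Complex.exp ((ν:ℂ)*w/2) + Complex.exp (-((ν:ℂ)*w/2)))-((Complex.exp ((ν:ℂ)*w/2) + Complex.exp (-((ν:ℂ)*w/2)))^2-2))))/(Complex.exp (w/2) - Complex.exp (-(w/2)))), fun z => ?_⟩
    have hU : Complex.exp (z*w) * Complex.exp (-(z*w)) = 1 := by
      rw [← Complex.exp_add]; simp
    have hP : Complex.exp (w/2) * Complex.exp (-(w/2)) = 1 := by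
      rw [← Complex.exp_add]; simp
    have hR : Complex.exp ((ν:ℂ)*w/2) * Complex.exp (-((ν:ℂ)*w/2)) = 1 := by
      rw [← Complex.exp_add]; simp
    have e2p : Complex.exp ((z + 1 / 2) * w) = Complex.exp (z*w) * Complex.exp (w/2) := by
      rw [← Complex.exp_add]; ring_nf
    have e2m : Complex.exp (-((z + 1 / 2) * w)) = Complex.exp (-(z*w)) * Complex.exp (-(w/2)) := by
      rw [← Complex.exp_add]; ring_nf
    have e3p : Complex.exp ((z - 1 + 1 / 2) * w) = Complex.exp (z*w) * Complex.exp (-(w/2)) := by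
      rw [← Complex.exp_add]; ring_nf
    have e3m : Complex.exp (-((z - 1 + 1 / 2) * w)) = Complex.exp (-(z*w)) * Complex.exp (w/2) := by
      rw [← Complex.exp_add]; ring_nf
    have e4p : Complex.exp ((z + (ν:ℂ) / 2) * w) = Complex.exp (z*w) * Complex.exp ((ν:ℂ)*w/2) := by
      rw [← Complex.exp_add]; ring_nf
    have e4m : Complex.exp (-((z + (ν:ℂ) / 2) * w)) = Complex.exp (-(z*w)) * Complex.exp (-((ν:ℂ)*w/2)) := by
      rw [← Complex.exp_add]; ring_nf
    have e5p : Complex.exp ((z + ((ν:ℂ) + 1) / 2) * w) = Complex.exp (z*w) * Complex.exp ((ν:ℂ)*w/2) * Complex.exp (w/2) := by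
      rw [← Complex.exp_add, ← Complex.exp_add]; ring_nf
    have e5m : Complex.exp (-((z + ((ν:ℂ) + 1) / 2) * w)) = Complex.exp (-(z*w)) * Complex.exp (-((ν:ℂ)*w/2)) * Complex.exp (-(w/2)) := by
      rw [← Complex.exp_add, ← Complex.exp_add]; ring_nf
    have e6p : Complex.exp ((z - 1 + ((ν:ℂ) + 1) / 2) * w) = Complex.exp (z*w) * Complex.exp ((ν:ℂ)*w/2) * Complex.exp (-(w/2)) := by
      rw [← Complex.exp_add, ← Complex.exp_add]; ring_nf
    have e6m : Complex.exp (-((z - 1 + ((ν:ℂ) + 1) / 2) * w)) = Complex.exp (-(z*w)) * Complex.exp (-((ν:ℂ)*w/2)) * Complex.exp (w/2) := by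
      rw [← Complex.exp_add, ← Complex.exp_add]; ring_nf
    have e7p : Complex.exp ((z + (ν:ℂ)) * w) = Complex.exp (z*w) * Complex.exp ((ν:ℂ)*w/2) * Complex.exp ((ν:ℂ)*w/2) := by
      rw [← Complex.exp_add, ← Complex.exp_add]; ring_nf
    have e7m : Complex.exp (-((z + (ν:ℂ)) * w)) = Complex.exp (-(z*w)) * Complex.exp (-((ν:ℂ)*w/2)) * Complex.exp (-((ν:ℂ)*w/2)) := by
      rw [← Complex.exp_add, ← Complex.exp_add]; ring_nf
    have e8p : Complex.exp ((z + (ν:ℂ) + 1 / 2) * w) = Complex.exp (z*w) * Complex.exp ((ν:ℂ)*w/2) * Complex.exp ((ν:ℂ)*w/2) * Complex.exp (w/2) := by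
      rw [← Complex.exp_add, ← Complex.exp_add, ← Complex.exp_add]; ring_nf
    have e8m : Complex.exp (-((z + (ν:ℂ) + 1 / 2) * w)) = Complex.exp (-(z*w)) * Complex.exp (-((ν:ℂ)*w/2)) * Complex.exp (-((ν:ℂ)*w/2)) * Complex.exp (-(w/2)) := by
      rw [← Complex.exp_add, ← Complex.exp_add, ← Complex.exp_add]; ring_nf
    have e9p : Complex.exp ((z + (ν:ℂ) - 1 + 1 / 2) * w) = Complex.exp (z*w) * Complex.exp ((ν:ℂ)*w/2) * Complex.exp ((ν:ℂ)*w/2) * Complex.exp (-(w/2)) := by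
      rw [← Complex.exp_add, ← Complex.exp_add, ← Complex.exp_add]; ring_nf
    have e9m : Complex.exp (-((z + (ν:ℂ) - 1 + 1 / 2) * w)) = Complex.exp (-(z*w)) * Complex.exp (-((ν:ℂ)*w/2)) * Complex.exp (-((ν:ℂ)*w/2)) * Complex.exp (w/2) := by
      rw [← Complex.exp_add, ← Complex.exp_add, ← Complex.exp_add]; ring_nf
    simp only [sig, xl]
    push_cast
    simp only [hev2, hev1, hx, e2p, e2m, e3p, e3m, e4p, e4m, e5p, e5m, e6p, e6m, e7p, e7m, e8p, e8m, e9p, e9m]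
    set u : ℂ := Complex.exp (z*w) with hu_def
    set ui : ℂ := Complex.exp (-(z*w)) with hui_def
    set p : ℂ := Complex.exp (w/2) with hp_def
    set pi : ℂ := Complex.exp (-(w/2)) with hpi_def
    set r : ℂ := Complex.exp ((ν:ℂ)*w/2) with hr_def
    set ri : ℂ := Complex.exp (-((ν:ℂ)*w/2)) with hri_def
    have hgd := gdlem ((r - ri)*(r + ri)*(st.coeff 2) + (1/2)*(p - pi)*((r + ri)^2-2)*(tt.coeff 1)) ((r - ri)*((st.coeff 1)+(st.coeff 2)*c3*(2-(r + ri))) + (1/2)*(p - pi)*((tt.coeff 0)*(r + ri)+(tt.coeff 1)*c3*((r + ri)-((r + ri)^2-2)))) (p - pi) (c1*(u*r) + c2*(ui*ri) + c3) (c1*(u*r*p) + c2*(ui*ri*pi) + c3 - (c1*(u*r*pi) + c2*(ui*ri*p) + c3)) hlam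
    constructor
    · linear_combination
        ((-1/2 : ℂ)*c1*c2*(tt.coeff 1)*pi*r*ri^3
        + (1/2 : ℂ)*c1*c2*(tt.coeff 1)*pi*r^3*ri
        + (1/2 : ℂ)*c1*c2*(tt.coeff 1)*p*r*ri^3
        + (-1/2 : ℂ)*c1*c2*(tt.coeff 1)*p*r^3*ri
        + c1*c2*(st.coeff 2)
        + (-1 : ℂ)*c1*c2*(st.coeff 2)*r*ri^3
        + c1*c2*(st.coeff 2)*r^2*ri^2
        + (-1 : ℂ)*c1*c2*(st.coeff 2)*r^3*ri) * hU
        + (0 : ℂ) * hP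
        + ((1/4 : ℂ)*c2*(tt.coeff 0)*ui*pi
        + (-1/4 : ℂ)*c2*(tt.coeff 0)*ui*p
        + (-1/2 : ℂ)*c2*(st.coeff 1)*ui
        + (1/4 : ℂ)*c2*c3*(tt.coeff 1)*ui*pi
        + (-1/4 : ℂ)*c2*c3*(tt.coeff 1)*ui*p
        + (-1 : ℂ)*c2*c3*(st.coeff 2)*ui
        + (1/4 : ℂ)*c2^2*(tt.coeff 1)*ui^2*pi
        + (1/4 : ℂ)*c2^2*(tt.coeff 1)*ui^2*pi*r*ri
        + (-1/4 : ℂ)*c2^2*(tt.coeff 1)*ui^2*p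
        + (-1/4 : ℂ)*c2^2*(tt.coeff 1)*ui^2*p*r*ri
        + (-1/2 : ℂ)*c2^2*(st.coeff 2)*ui^2
        + (-1/2 : ℂ)*c2^2*(st.coeff 2)*ui^2*r*ri
        + (-1/4 : ℂ)*c1*(tt.coeff 0)*u*pi
        + (1/4 : ℂ)*c1*(tt.coeff 0)*u*p
        + (-1/2 : ℂ)*c1*(st.coeff 1)*u
        + (-1/4 : ℂ)*c1*c3*(tt.coeff 1)*u*pi
        + (1/4 : ℂ)*c1*c3*(tt.coeff 1)*u*p
        + (-1 : ℂ)*c1*c3*(st.coeff 2)*u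
        + (-1/2 : ℂ)*c1*c2*(tt.coeff 1)*pi*ri^2
        + (1/2 : ℂ)*c1*c2*(tt.coeff 1)*pi*r^2
        + (1/2 : ℂ)*c1*c2*(tt.coeff 1)*p*ri^2
        + (-1/2 : ℂ)*c1*c2*(tt.coeff 1)*p*r^2
        + (-1 : ℂ)*c1*c2*(st.coeff 2)
        + (-1 : ℂ)*c1*c2*(st.coeff 2)*ri^2
        + c1*c2*(st.coeff 2)*r*ri
        + (-1 : ℂ)*c1*c2*(st.coeff 2)*r^2
        + (-1/4 : ℂ)*c1^2*(tt.coeff 1)*u^2*pi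
        + (-1/4 : ℂ)*c1^2*(tt.coeff 1)*u^2*pi*r*ri
        + (1/4 : ℂ)*c1^2*(tt.coeff 1)*u^2*p
        + (1/4 : ℂ)*c1^2*(tt.coeff 1)*u^2*p*r*ri
        + (-1/2 : ℂ)*c1^2*(st.coeff 2)*u^2
        + (-1/2 : ℂ)*c1^2*(st.coeff 2)*u^2*r*ri) * hR
    · refine mul_left_cancel₀ hlam ?_
      linear_combination
        (((2 : ℂ)*c1*c2*(st.coeff 2)*pi
        + (-2 : ℂ)*c1*c2*(st.coeff 2)*pi*r^2*ri^2
        + (-2 : ℂ)*c1*c2*(st.coeff 2)*p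
        + (2 : ℂ)*c1*c2*(st.coeff 2)*p*r^2*ri^2)) * hU
        + ((c2*(tt.coeff 0)*ui
        + (-1 : ℂ)*c2*(tt.coeff 0)*ui*r*ri
        + c2*c3*(tt.coeff 1)*ui
        + (-1 : ℂ)*c2*c3*(tt.coeff 1)*ui*r*ri
        + c2^2*(tt.coeff 1)*ui^2
        + (2 : ℂ)*c2^2*(tt.coeff 1)*ui^2*ri^2
        + (-2 : ℂ)*c2^2*(tt.coeff 1)*ui^2*r*ri^3
        + (-1 : ℂ)*c2^2*(tt.coeff 1)*ui^2*r^2*ri^2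
        + (-1 : ℂ)*c1*(tt.coeff 0)*u
        + c1*(tt.coeff 0)*u*r*ri
        + (-1 : ℂ)*c1*c3*(tt.coeff 1)*u
        + c1*c3*(tt.coeff 1)*u*r*ri
        + (-1 : ℂ)*c1^2*(tt.coeff 1)*u^2
        + (-2 : ℂ)*c1^2*(tt.coeff 1)*u^2*r^2
        + c1^2*(tt.coeff 1)*u^2*r^2*ri^2
        + (2 : ℂ)*c1^2*(tt.coeff 1)*u^2*r^3*ri)) * hP
        + (((-1 : ℂ)*c2*(tt.coeff 0)*ui
        + (1/2 : ℂ)*c2*(tt.coeff 0)*ui*pi^2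
        + (1/2 : ℂ)*c2*(tt.coeff 0)*ui*p^2
        + (-1 : ℂ)*c2*(st.coeff 1)*ui*pi
        + c2*(st.coeff 1)*ui*p
        + (-1 : ℂ)*c2*c3*(tt.coeff 1)*ui
        + (1/2 : ℂ)*c2*c3*(tt.coeff 1)*ui*pi^2
        + (1/2 : ℂ)*c2*c3*(tt.coeff 1)*ui*p^2
        + (-2 : ℂ)*c2*c3*(st.coeff 2)*ui*pi
        + (2 : ℂ)*c2*c3*(st.coeff 2)*ui*p
        + (-1 : ℂ)*c2^2*(tt.coeff 1)*ui^2
        + (-2 : ℂ)*c2^2*(tt.coeff 1)*ui^2*ri^2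
        + (-1 : ℂ)*c2^2*(tt.coeff 1)*ui^2*r*ri
        + (1/2 : ℂ)*c2^2*(tt.coeff 1)*ui^2*pi^2
        + c2^2*(tt.coeff 1)*ui^2*pi^2*ri^2
        + (1/2 : ℂ)*c2^2*(tt.coeff 1)*ui^2*pi^2*r*ri
        + (1/2 : ℂ)*c2^2*(tt.coeff 1)*ui^2*p^2
        + c2^2*(tt.coeff 1)*ui^2*p^2*ri^2
        + (1/2 : ℂ)*c2^2*(tt.coeff 1)*ui^2*p^2*r*ri
        + (-1 : ℂ)*c2^2*(st.coeff 2)*ui^2*pi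
        + (-1 : ℂ)*c2^2*(st.coeff 2)*ui^2*pi*r*ri
        + c2^2*(st.coeff 2)*ui^2*p
        + c2^2*(st.coeff 2)*ui^2*p*r*ri
        + c1*(tt.coeff 0)*u
        + (-1/2 : ℂ)*c1*(tt.coeff 0)*u*pi^2
        + (-1/2 : ℂ)*c1*(tt.coeff 0)*u*p^2
        + (-1 : ℂ)*c1*(st.coeff 1)*u*pi
        + c1*(st.coeff 1)*u*p
        + c1*c3*(tt.coeff 1)*u
        + (-1/2 : ℂ)*c1*c3*(tt.coeff 1)*u*pi^2
        + (-1/2 : ℂ)*c1*c3*(tt.coeff 1)*u*p^2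
        + (-2 : ℂ)*c1*c3*(st.coeff 2)*u*pi
        + (2 : ℂ)*c1*c3*(st.coeff 2)*u*p
        + (-2 : ℂ)*c1*c2*(st.coeff 2)*pi
        + (-2 : ℂ)*c1*c2*(st.coeff 2)*pi*r*ri
        + (2 : ℂ)*c1*c2*(st.coeff 2)*p
        + (2 : ℂ)*c1*c2*(st.coeff 2)*p*r*ri
        + c1^2*(tt.coeff 1)*u^2
        + c1^2*(tt.coeff 1)*u^2*r*ri
        + (2 : ℂ)*c1^2*(tt.coeff 1)*u^2*r^2
        + (-1/2 : ℂ)*c1^2*(tt.coeff 1)*u^2*pi^2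
        + (-1/2 : ℂ)*c1^2*(tt.coeff 1)*u^2*pi^2*r*ri
        + (-1 : ℂ)*c1^2*(tt.coeff 1)*u^2*pi^2*r^2
        + (-1/2 : ℂ)*c1^2*(tt.coeff 1)*u^2*p^2
        + (-1/2 : ℂ)*c1^2*(tt.coeff 1)*u^2*p^2*r*ri
        + (-1 : ℂ)*c1^2*(tt.coeff 1)*u^2*p^2*r^2
        + (-1 : ℂ)*c1^2*(st.coeff 2)*u^2*pi
        + (-1 : ℂ)*c1^2*(st.coeff 2)*u^2*pi*r*ri
        + c1^2*(st.coeff 2)*u^2*p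
        + c1^2*(st.coeff 2)*u^2*p*r*ri)) * hR
        - hgd
  · -- quadratic case
    refine ⟨st.coeff 2,
      st.coeff 1 + 3/2 * st.coeff 2 * c1 * (ν:ℂ)^2 + 3/2 * c1 * (ν:ℂ) * tt.coeff 1,
      st.coeff 2 * (c1*(ν:ℂ)^2/4)^2 + 1/4 * st.coeff 2 * (ν:ℂ)^2 * (c2^2 - 4*c1*c3)
        + st.coeff 1 * (c1*(ν:ℂ)^2/4) + st.coeff 0
        + 1/4 * tt.coeff 1 * (ν:ℂ) * (c2^2 - 4*c1*c3)
        + 1/2 * c1 * (ν:ℂ) * tt.coeff 1 * (c1*(ν:ℂ)^2/4)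
        + 1/2 * c1 * (ν:ℂ) * tt.coeff 0,
      2 * (ν:ℂ) * st.coeff 2 + tt.coeff 1,
      (ν:ℂ) * st.coeff 1 + st.coeff 2 * c1 * (ν:ℂ)^3 / 2
        + 3/4 * c1 * (ν:ℂ)^2 * tt.coeff 1 + tt.coeff 0,
      fun z => ⟨?_, ?_⟩⟩ <;>
    · simp only [sig, xl, hev2, hev1]
      push_cast
      simp only [hx]
      ring
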